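/- Let H be a Hopf algebra with character δ, A a left H-module algebra, and τ : A → k a σ-trace for a grouplike σ ∈ H (i.e., τ(ab) = τ(b·σ(a))). Then τ is δ-invariant (τ(h(a)) = δ(h)τ(a) for all h, a) if and only if the integration by parts formula holds: τ(h(a)·b) = τ(a·S̃_δ(h)(b)) for all h ∈ H and a, b ∈ A, where S̃_δ(h) = δ(h^(1))S(h^(2)). -/

import Mathlib

open TensorProduct

/-- The `δ`-twisted antipode `S̃_δ = δ * S`, i.e. `S̃_δ(h) = δ(h⁽¹⁾) S(h⁽²⁾)`. -/
noncomputable def twistedAntipode {k H : Type*} [CommSemiring k] [Semiring H]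
    [HopfAlgebra k H] (δ : H →ₐ[k] k) : H →ₗ[k] H :=
  LinearMap.mul' k H ∘ₗ
    TensorProduct.map (Algebra.linearMap k H ∘ₗ δ.toLinearMap) (HopfAlgebra.antipode (R := k)) ∘ₗ
    Coalgebra.comul

lemma aux_sum_counit_smul {k H : Type*} [CommSemiring k] [AddCommMonoid H] [Module k H]
    [Coalgebra k H] {h : H} {ι : Type*} (r : Coalgebra.Repr k h ι) :
    ∑ i ∈ r.index, Coalgebra.counit (R := k) (r.right i) • r.left i = h := by
  have := congrArg (TensorProduct.rid k H) (Coalgebra.sum_tmul_counit_eq r)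
  rw [map_sum] at this
  simpa only [TensorProduct.rid_tmul, one_smul] using this

lemma aux_counit_antipode {k H : Type*} [CommSemiring k] [Semiring H] [HopfAlgebra k H] (h : H) :
    Coalgebra.counit (R := k) (HopfAlgebra.antipode (R := k) h) = Coalgebra.counit (R := k) h := by
  have r := Coalgebra.Repr.arbitrary k h
  have h1 := congrArg (Coalgebra.counit (R := k)) (HopfAlgebra.sum_antipode_mul_eq_algebraMap_counit r)
  rw [map_sum] at h1
  have h2 : ∑ i ∈ r.index,
      Coalgebra.counit (R := k) (HopfAlgebra.antipode (R := k) (r.left i) * r.right i) =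
      Coalgebra.counit (R := k) (HopfAlgebra.antipode (R := k) h) := by
    conv_rhs => rw [← aux_sum_counit_smul r]
    simp [map_sum, map_smul, smul_eq_mul, mul_comm]
  rw [h2] at h1
  simpa [Algebra.algebraMap_eq_smul_one, map_smul, smul_eq_mul] using h1

lemma twistedAntipode_repr {k H : Type*} [CommSemiring k] [Semiring H] [HopfAlgebra k H]
    (δ : H →ₐ[k] k) {h : H} {ι : Type*} (r : Coalgebra.Repr k h ι) :
    twistedAntipode δ h =
      ∑ i ∈ r.index, δ (r.left i) • HopfAlgebra.antipode (R := k) (r.right i) := by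
  rw [twistedAntipode]
  simp only [LinearMap.coe_comp, Function.comp_apply]
  rw [← r.eq, map_sum, map_sum]
  simp [TensorProduct.map_tmul, LinearMap.mul'_apply, Algebra.smul_def]

lemma counit_twistedAntipode {k H : Type*} [CommSemiring k] [Semiring H] [HopfAlgebra k H]
    (δ : H →ₐ[k] k) (h : H) :
    Coalgebra.counit (R := k) (twistedAntipode δ h) = δ h := by
  have r := Coalgebra.Repr.arbitrary k h
  rw [twistedAntipode_repr δ r, map_sum]
  conv_rhs => rw [← aux_sum_counit_smul r]
  simp [map_smul, smul_eq_mul, aux_counit_antipode, map_sum, mul_comm]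

/-- (Integration by parts formula.) Let `H` be a Hopf algebra with character `δ`, `A` a unital
left `H`-module algebra, `σ ∈ H` grouplike, and `τ : A → k` a `σ`-trace
(`τ(ab) = τ(b·σ(a))`).  Then `τ` is `δ`-invariant (`τ(h(a)) = δ(h)τ(a)`) if and only if
`τ(h(a)·b) = τ(a·S̃_δ(h)(b))` for all `h ∈ H`, `a, b ∈ A`. -/
theorem delta_invariant_iff_integration_by_parts {k H A : Type*} [Field k] [Ring H]
    [HopfAlgebra k H] [Ring A] [Algebra k A]
    (δ : H →ₐ[k] k)
    (act : H →ₗ[k] A →ₗ[k] A)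
    (hact_mul : ∀ (g h : H) (a : A), act (g * h) a = act g (act h a))
    (hact_one : ∀ a : A, act 1 a = a)
    (hma_mul : ∀ (h : H) (a b : A), act h (a * b) =
      LinearMap.mul' k A (TensorProduct.map (act.flip a) (act.flip b) (Coalgebra.comul h)))
    (hma_one : ∀ h : H, act h 1 = Coalgebra.counit (R := k) h • (1 : A))
    (σ : H) (hσ0 : σ ≠ 0) (hσ : Coalgebra.comul (R := k) σ = σ ⊗ₜ[k] σ)
    (τ : A →ₗ[k] k)
    (htrace : ∀ a b : A, τ (a * b) = τ (b * act σ a)) :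
    (∀ (h : H) (a : A), τ (act h a) = δ h * τ a) ↔
      (∀ (h : H) (a b : A), τ (act h a * b) = τ (a * act (twistedAntipode δ h) b)) := by
  classical
  set S : H →ₗ[k] H := HopfAlgebra.antipode (R := k) with hSdef
  constructor
  · intro inv h a b
    have r := Coalgebra.Repr.arbitrary k h
    have r1 : (i : r.ι) → Coalgebra.Repr k (r.left i) (H × H) :=
      fun i => Coalgebra.Repr.arbitrary k (r.left i)
    have r2 : (i : r.ι) → Coalgebra.Repr k (r.right i) (H × H) :=
      fun i => Coalgebra.Repr.arbitrary k (r.right i)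
    -- the trilinear evaluation map
    set T : H ⊗[k] (H ⊗[k] H) →ₗ[k] k :=
      τ ∘ₗ LinearMap.mul' k A ∘ₗ
        TensorProduct.map (act.flip a)
          ((act.flip b) ∘ₗ LinearMap.mul' k H ∘ₗ LinearMap.lTensor H S) with hT
    have hTapp : ∀ x y z : H, T (x ⊗ₜ[k] (y ⊗ₜ[k] z)) = τ (act x a * act (y * S z) b) := by
      intro x y z
      simp [hT, LinearMap.mul'_apply]
    have key := Coalgebra.sum_tmul_tmul_eq r r1 r2
    have key2 := congrArg T key
    simp only [map_sum, hTapp] at key2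
    -- key2 : ∑ i, ∑ j, τ (act ((r1 i).left j) a * act ((r1 i).right j * S (r.right i)) b)
    --      = ∑ i, ∑ j, τ (act (r.left i) a * act ((r2 i).left j * S ((r2 i).right j)) b)
    have hL : τ (act h a * b) = ∑ i ∈ r.index, ∑ j ∈ (r2 i).index,
        τ (act (r.left i) a * act ((r2 i).left j * S ((r2 i).right j)) b) := by
      conv_lhs => rw [← aux_sum_counit_smul r]
      rw [map_sum, LinearMap.sum_apply, Finset.sum_mul, map_sum]
      refine Finset.sum_congr rfl fun i _ => ?_
      have hsum : ∑ j ∈ (r2 i).index, act ((r2 i).left j * S ((r2 i).right j)) b =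
          (Coalgebra.counit (R := k) (r.right i)) • b := by
        rw [hSdef]
        calc ∑ j ∈ (r2 i).index,
              act ((r2 i).left j * HopfAlgebra.antipode (R := k) ((r2 i).right j)) b
            = act (∑ j ∈ (r2 i).index,
                (r2 i).left j * HopfAlgebra.antipode (R := k) ((r2 i).right j)) b := by
              rw [map_sum, LinearMap.sum_apply]
          _ = act ((Coalgebra.counit (R := k) (r.right i)) • (1 : H)) b := by
              rw [HopfAlgebra.sum_mul_antipode_eq_smul]
          _ = (Coalgebra.counit (R := k) (r.right i)) • b := by
              rw [map_smul, LinearMap.smul_apply, hact_one]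
      calc τ (act ((Coalgebra.counit (R := k) (r.right i)) • r.left i) a * b)
          = τ (act (r.left i) a * ((Coalgebra.counit (R := k) (r.right i)) • b)) := by
            simp [map_smul, smul_mul_assoc, mul_smul_comm]
        _ = ∑ j ∈ (r2 i).index,
              τ (act (r.left i) a * act ((r2 i).left j * S ((r2 i).right j)) b) := by
            rw [← hsum, Finset.mul_sum, map_sum]
    have hR : τ (a * act (twistedAntipode δ h) b) = ∑ i ∈ r.index, ∑ j ∈ (r1 i).index,
        τ (act ((r1 i).left j) a * act ((r1 i).right j * S (r.right i)) b) := by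
      rw [twistedAntipode_repr δ r, map_sum, LinearMap.sum_apply, Finset.mul_sum, map_sum]
      refine Finset.sum_congr rfl fun i _ => ?_
      rw [map_smul, LinearMap.smul_apply, mul_smul_comm, map_smul, smul_eq_mul,
        ← inv (r.left i)]
      rw [hma_mul, ← (r1 i).eq, map_sum, map_sum]
      simp [LinearMap.mul'_apply, TensorProduct.map_tmul, hact_mul, hSdef]
    rw [hL, hR]
    exact key2.symm
  · intro ibp h a
    have h1 := ibp h a 1
    rw [mul_one] at h1
    rw [h1, hma_one, counit_twistedAntipode]
    simp [mul_smul_comm, smul_eq_mul, mul_comm]
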